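/- Let ℓ∘h and M be such that F(p) := ℓ(h(p)) − Mp is L-Lipschitz on ℝ². Suppose a finite training set 𝒯 = {(p_d, θ_d)} with θ_d = h(p_d) is given, and define S = ⋃_{(p_d,θ_d)∈𝒯} { p ∈ ℝ² : |p − p_d| ≤ r and |ℓ(θ_d) − M p_d| + L·|p − p_d| ≤ ε }. Then for every p ∈ S, the perception error satisfies |ℓ(h(p)) − M p| ≤ ε. -/

import Mathlib

open EuclideanSpace Metric

/-- If `F p := ℓ(h p) - M p` is `L`-Lipschitz, and the training set
`T` (with `θ_d = h p_d`) defines the set `S`, then the perception error on `S`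
is bounded by `ε`. -/
theorem stmt0 {Θ : Type*} (h : EuclideanSpace ℝ (Fin 2) → Θ)
    (ℓ : Θ → EuclideanSpace ℝ (Fin 2))
    (M : EuclideanSpace ℝ (Fin 2) →ₗ[ℝ] EuclideanSpace ℝ (Fin 2))
    (L ε r : ℝ) (hL : 0 < L) (hε : 0 < ε) (hr : 0 < r)
    (hLip : ∀ p p' : EuclideanSpace ℝ (Fin 2),
      ‖(ℓ (h p) - M p) - (ℓ (h p') - M p')‖ ≤ L * ‖p - p'‖)
    (T : Finset ((EuclideanSpace ℝ (Fin 2)) × Θ))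
    (hT : ∀ d ∈ T, d.2 = h d.1)
    (S : Set (EuclideanSpace ℝ (Fin 2)))
    (hS : S = ⋃ d ∈ T, {p : EuclideanSpace ℝ (Fin 2) |
      ‖p - d.1‖ ≤ r ∧ ‖ℓ d.2 - M d.1‖ + L * ‖p - d.1‖ ≤ ε}) :
    ∀ p ∈ S, ‖ℓ (h p) - M p‖ ≤ ε := by
  intro p hp
  subst hS
  simp only [Set.mem_iUnion, Set.mem_setOf_eq] at hp
  obtain ⟨d, hd, _, hbd⟩ := hp
  have hθ := hT d hd
  calc ‖ℓ (h p) - M p‖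
      ≤ ‖(ℓ (h p) - M p) - (ℓ (h d.1) - M d.1)‖ + ‖ℓ (h d.1) - M d.1‖ := by
        have := norm_add_le ((ℓ (h p) - M p) - (ℓ (h d.1) - M d.1)) (ℓ (h d.1) - M d.1)
        simpa using this
    _ ≤ L * ‖p - d.1‖ + ‖ℓ d.2 - M d.1‖ := by
        rw [hθ]; exact add_le_add_left (hLip p d.1) _
    _ ≤ ε := by linarith
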